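/- arXiv:1112.0844 — 7 statements merged into one kernel-verified Lean document; each statement's English description precedes it below -/
import Mathlib

section
/- Let S ⊆ ℝ^k be an open set and let a, ξ : S → ℝ^k be continuously differentiable maps. Define, for each x ∈ S, the real alternating bilinear form G_x on ℝ^k × ℝ^k (the curvature F of the SYZ-transformed connection ∇̌ = d + 2π√−1(Σ_j a_j dx_j + Σ_j ξ_j dy_j) divided by 2π√−1) by G_x((u_1,w_1),(u_2,w_2)) = ⟨u_2, Da(x)u_1⟩ − ⟨u_1, Da(x)u_2⟩ + ⟨w_2, Dξ(x)u_1⟩ − ⟨w_1, Dξ(x)u_2⟩, and let J : ℝ^k × ℝ^k → ℝ^k × ℝ^k, J(u,w) = (−w,u), be the standard complex structure. Then G_x(JX_1, JX_2) = G_x(X_1, X_2) for all x ∈ S and all X_1, X_2 ∈ ℝ^k × ℝ^k — i.e., the curvature is of type (1,1), equivalently its (0,2)-part and (2,0)-part both vanish — if and only if both Da(x) and Dξ(x) are symmetric linear maps for every x ∈ S (equivalently, the Lagrangian condition ∂ξ_j/∂x_l = ∂ξ_l/∂x_j and the flatness condition ∂a_j/∂x_l = ∂a_l/∂x_j both hold).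 -/
open scoped RealInnerProductSpace

/-- The curvature form
`G_x((u₁,w₁),(u₂,w₂)) = ⟨u₂,Da(x)u₁⟩ − ⟨u₁,Da(x)u₂⟩ + ⟨w₂,Dξ(x)u₁⟩ − ⟨w₁,Dξ(x)u₂⟩`
of the SYZ-transformed connection is of type (1,1) with respect to the standard complex
structure `J(u,w) = (−w,u)` — i.e. `G_x(JX₁,JX₂) = G_x(X₁,X₂)` for all `x ∈ S` — iff both
`Da(x)` and `Dξ(x)` are symmetric for every `x ∈ S`. -/
theorem stmt_2 (k : ℕ)
    (S : Set (EuclideanSpace ℝ (Fin k))) (hS : IsOpen S)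
    (a ξ : EuclideanSpace ℝ (Fin k) → EuclideanSpace ℝ (Fin k))
    (ha : ContDiffOn ℝ 1 a S) (hξ : ContDiffOn ℝ 1 ξ S)
    -- the curvature divided by 2π√−1
    (G : EuclideanSpace ℝ (Fin k) →
      (EuclideanSpace ℝ (Fin k) × EuclideanSpace ℝ (Fin k)) →
      (EuclideanSpace ℝ (Fin k) × EuclideanSpace ℝ (Fin k)) → ℝ)
    (hG : ∀ x u₁ w₁ u₂ w₂, G x (u₁, w₁) (u₂, w₂) =
      ⟪u₂, fderiv ℝ a x u₁⟫ - ⟪u₁, fderiv ℝ a x u₂⟫ +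
      ⟪w₂, fderiv ℝ ξ x u₁⟫ - ⟪w₁, fderiv ℝ ξ x u₂⟫)
    -- the standard complex structure
    (J : (EuclideanSpace ℝ (Fin k) × EuclideanSpace ℝ (Fin k)) →
      (EuclideanSpace ℝ (Fin k) × EuclideanSpace ℝ (Fin k)))
    (hJ : ∀ u w, J (u, w) = (-w, u)) :
    (∀ x ∈ S, ∀ X₁ X₂ : EuclideanSpace ℝ (Fin k) × EuclideanSpace ℝ (Fin k),
        G x (J X₁) (J X₂) = G x X₁ X₂) ↔
      (∀ x ∈ S, (∀ u v : EuclideanSpace ℝ (Fin k),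
          ⟪fderiv ℝ a x u, v⟫ = ⟪fderiv ℝ a x v, u⟫) ∧
        (∀ u v : EuclideanSpace ℝ (Fin k),
          ⟪fderiv ℝ ξ x u, v⟫ = ⟪fderiv ℝ ξ x v, u⟫)) := by

  constructor
  · intro h x hx
    have key : ∀ u₁ w₁ u₂ w₂ : EuclideanSpace ℝ (Fin k),
        ⟪w₂, fderiv ℝ a x w₁⟫ - ⟪w₁, fderiv ℝ a x w₂⟫ -
        ⟪u₂, fderiv ℝ ξ x w₁⟫ + ⟪u₁, fderiv ℝ ξ x w₂⟫ =
        ⟪u₂, fderiv ℝ a x u₁⟫ - ⟪u₁, fderiv ℝ a x u₂⟫ +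
        ⟪w₂, fderiv ℝ ξ x u₁⟫ - ⟪w₁, fderiv ℝ ξ x u₂⟫ := by
      intro u₁ w₁ u₂ w₂
      have h1 := h x hx (u₁, w₁) (u₂, w₂)
      rw [hJ, hJ, hG, hG] at h1
      simp only [map_neg, inner_neg_left, inner_neg_right, neg_neg] at h1
      linarith
    constructor
    · intro u v
      have h1 := key 0 u 0 v
      simp only [map_zero, inner_zero_left, inner_zero_right] at h1
      rw [real_inner_comm v (fderiv ℝ a x u), real_inner_comm u (fderiv ℝ a x v)]
      linarith
    · intro u v
      have h1 := key u 0 0 v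
      simp only [map_zero, inner_zero_left, inner_zero_right] at h1
      rw [real_inner_comm v (fderiv ℝ ξ x u), real_inner_comm u (fderiv ℝ ξ x v)]
      linarith
  · rintro h x hx ⟨u₁, w₁⟩ ⟨u₂, w₂⟩
    obtain ⟨ha', hξ'⟩ := h x hx
    rw [hJ, hJ, hG, hG]
    simp only [map_neg, inner_neg_left, inner_neg_right, neg_neg]
    have e1 : ⟪w₂, fderiv ℝ a x w₁⟫ = ⟪w₁, fderiv ℝ a x w₂⟫ := by
      rw [real_inner_comm, ha' w₁ w₂, real_inner_comm]
    have e2 : ⟪u₁, fderiv ℝ ξ x w₂⟫ = ⟪w₂, fderiv ℝ ξ x u₁⟫ := by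
      rw [real_inner_comm, hξ' w₂ u₁, real_inner_comm]
    have e3 : ⟪u₂, fderiv ℝ ξ x w₁⟫ = ⟪w₁, fderiv ℝ ξ x u₂⟫ := by
      rw [real_inner_comm, hξ' w₁ u₂, real_inner_comm]
    have e4 : ⟪u₂, fderiv ℝ a x u₁⟫ = ⟪u₁, fderiv ℝ a x u₂⟫ := by
      rw [real_inner_comm, ha' u₁ u₂, real_inner_comm]
    linarith
end

section
/- Let f : ℂ → ℂ be a polynomial with distinct zeros and let Y = {(u,v,z) ∈ ℂ² × ℂˣ : uv = f(z)}, equipped at p = (u,v,z) ∈ Y with the Kähler form ω_p(X_1,X_2) = Im(a_1·conj(a_2)) + Im(b_1·conj(b_2)) + Im(c_1·conj(c_2))/|z|² for X_i = (a_i,b_i,c_i) ∈ ℂ³. Let p = (u,v,z) ∈ Y with (u,v) ≠ (0,0). Then the fibers of the map ρ(u,v,z) = (log|z|, (|u|²−|v|²)/2) are isotropic at p: for any two vectors X_1 = (a_1,b_1,c_1) and X_2 = (a_2,b_2,c_2) in ℂ³ satisfying, for j = 1,2, the tangency conditions v·a_j + u·b_j = f′(z)·c_j, Re(conj(z)·c_j)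 = 0, and Re(conj(u)·a_j) − Re(conj(v)·b_j) = 0, one has ω_p(X_1,X_2) = 0. -/
open Complex

/-- The Kähler form `ω = −(√−1/2)(du∧dū + dv∧dv̄ + dz∧dz̄/|z|²)` of `Y ⊆ ℂ² × ℂˣ` at the
point `p = (u,v,z)`, evaluated on vectors `Xᵢ = (aᵢ,bᵢ,cᵢ) ∈ ℂ³`:
`ω_p(X₁,X₂) = Im(a₁·conj(a₂)) + Im(b₁·conj(b₂)) + Im(c₁·conj(c₂))/|z|²`. -/
noncomputable def omegaY (p X₁ X₂ : ℂ × ℂ × ℂ) : ℝ :=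
  (X₁.1 * (starRingEnd ℂ) X₂.1).im + (X₁.2.1 * (starRingEnd ℂ) X₂.2.1).im +
    (X₁.2.2 * (starRingEnd ℂ) X₂.2.2).im / Complex.normSq p.2.2

/-- Two purely imaginary numbers pair to a real number: `Im(x · conj y) = 0`. -/
lemma im_mul_conj_eq_zero {x y : ℂ} (hx : x.re = 0) (hy : y.re = 0) :
    (x * (starRingEnd ℂ) y).im = 0 := by
  simp [Complex.mul_im, hx, hy]

/-- `Im((t·x)·conj(t·y)) = |t|² · Im(x · conj y)`. -/
lemma im_mul_mul_conj (t x y : ℂ) :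
    ((t * x) * (starRingEnd ℂ) (t * y)).im
      = Complex.normSq t * (x * (starRingEnd ℂ) y).im := by
  have h : (t * x) * (starRingEnd ℂ) (t * y)
      = ((Complex.normSq t : ℝ) : ℂ) * (x * (starRingEnd ℂ) y) := by
    rw [map_mul, ← Complex.mul_conj]
    ring
  rw [h]
  simp [Complex.mul_im]

/-- The fibers of the Gross fibration
`ρ(u,v,z) = (log|z|, (|u|²−|v|²)/2)` on `Y = {uv = f(z)} ⊆ ℂ² × ℂˣ` are isotropic at every
point `p = (u,v,z)` with `(u,v) ≠ (0,0)`: any two vectors of `ℂ³` tangent to `Y` and to the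
level sets of `log|z|` and of `(|u|²−|v|²)/2` at `p` pair to zero under `ω_p`. -/
theorem stmt_4 (f : Polynomial ℂ)
    (hf : ∀ w : ℂ, f.eval w = 0 → (Polynomial.derivative f).eval w ≠ 0)
    (u v z : ℂ) (hz : z ≠ 0) (hY : u * v = f.eval z)
    (huv : (u, v) ≠ ((0 : ℂ), (0 : ℂ)))
    (a₁ b₁ c₁ a₂ b₂ c₂ : ℂ)
    (htan₁ : v * a₁ + u * b₁ = (Polynomial.derivative f).eval z * c₁)
    (htan₂ : v * a₂ + u * b₂ = (Polynomial.derivative f).eval z * c₂)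
    (hlog₁ : ((starRingEnd ℂ) z * c₁).re = 0)
    (hlog₂ : ((starRingEnd ℂ) z * c₂).re = 0)
    (hmu₁ : ((starRingEnd ℂ) u * a₁).re - ((starRingEnd ℂ) v * b₁).re = 0)
    (hmu₂ : ((starRingEnd ℂ) u * a₂).re - ((starRingEnd ℂ) v * b₂).re = 0) :
    omegaY (u, v, z) (a₁, b₁, c₁) (a₂, b₂, c₂) = 0 := by
  set w := (Polynomial.derivative f).eval z with hw
  -- Step 1: Im(c₁ · conj c₂) = 0, since conj z · cⱼ are purely imaginary and z ≠ 0.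
  have hc : (c₁ * (starRingEnd ℂ) c₂).im = 0 := by
    have h0 := im_mul_conj_eq_zero hlog₁ hlog₂
    rw [im_mul_mul_conj] at h0
    have hns : Complex.normSq ((starRingEnd ℂ) z) ≠ 0 := by
      simpa using hz
    exact (mul_eq_zero.mp h0).resolve_left hns
  -- Step 2: key algebraic identity.
  have key : ((Complex.normSq u + Complex.normSq v : ℝ) : ℂ) *
        (a₁ * (starRingEnd ℂ) a₂ + b₁ * (starRingEnd ℂ) b₂)
      = (w * c₁) * (starRingEnd ℂ) (w * c₂) +
        ((starRingEnd ℂ) u * a₁ - (starRingEnd ℂ) v * b₁) *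
          (starRingEnd ℂ) ((starRingEnd ℂ) u * a₂ - (starRingEnd ℂ) v * b₂) := by
    rw [← htan₁, ← htan₂]
    push_cast
    rw [← Complex.mul_conj u, ← Complex.mul_conj v]
    simp only [map_add, map_sub, map_mul, Complex.conj_conj]
    ring
  -- Step 3: imaginary parts of both RHS terms vanish.
  have him1 : ((w * c₁) * (starRingEnd ℂ) (w * c₂)).im = 0 := by
    rw [im_mul_mul_conj, hc, mul_zero]
  have him2 : (((starRingEnd ℂ) u * a₁ - (starRingEnd ℂ) v * b₁) *
      (starRingEnd ℂ) ((starRingEnd ℂ) u * a₂ - (starRingEnd ℂ) v * b₂)).im = 0 := by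
    apply im_mul_conj_eq_zero
    · rw [Complex.sub_re]; exact hmu₁
    · rw [Complex.sub_re]; exact hmu₂
  -- Step 4: deduce Im(a₁ā₂) + Im(b₁b̄₂) = 0.
  have hN : (0 : ℝ) < Complex.normSq u + Complex.normSq v := by
    have h : ¬(u = 0 ∧ v = 0) := by simpa [Prod.ext_iff] using huv
    rcases not_and_or.mp h with h | h
    · exact add_pos_of_pos_of_nonneg (Complex.normSq_pos.mpr h) (Complex.normSq_nonneg v)
    · exact add_pos_of_nonneg_of_pos (Complex.normSq_nonneg u) (Complex.normSq_pos.mpr h)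
  have him : (((Complex.normSq u + Complex.normSq v : ℝ) : ℂ) *
      (a₁ * (starRingEnd ℂ) a₂ + b₁ * (starRingEnd ℂ) b₂)).im = 0 := by
    rw [key, Complex.add_im, him1, him2, add_zero]
  rw [Complex.im_ofReal_mul, Complex.add_im] at him
  have hab : (a₁ * (starRingEnd ℂ) a₂).im + (b₁ * (starRingEnd ℂ) b₂).im = 0 :=
    (mul_eq_zero.mp him).resolve_left hN.ne'
  -- Conclusion.
  simp only [omegaY]
  rw [hc, zero_div, add_zero]
  exact hab
end

section
/- Let f : ℂ → ℂ be a polynomial with distinct zeros and Y = {(u,v,z) ∈ ℂ² × ℂˣ : uv = f(z)}. For p = (u,v,z) ∈ Y, the differential at p of the Gross fibration ρ(u,v,z) = (log|z|, (|u|²−|v|²)/2) is the ℝ-linear map Dρ_p : T_pY → ℝ², (a,b,c) ↦ (Re(conj(z)·c)/|z|², Re(conj(u)·a) − Re(conj(v)·b)), where T_pY = {(a,b,c) ∈ ℂ³ : v·a + u·b = f′(z)·c}. Then Dρ_p is surjective if and only if (u,v) ≠ (0,0). Moreover, (u,v) = (0,0) for a point of Y forces f(z) = 0; hence ρ fails to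 be a submersion at p ∈ Y exactly when u = 0, v = 0 and f(z) = 0, i.e., at the fixed points of the circle action (u,v,z) ↦ (e^{2π√−1 t}u, e^{−2π√−1 t}v, z). -/
open Complex

/-- For `p = (u,v,z)` on `Y = {uv = f(z)} ⊆ ℂ² × ℂˣ` with `f` having distinct
zeros, the differential `Dρ_p : T_pY → ℝ²`,
`(a,b,c) ↦ (Re(conj z·c)/|z|², Re(conj u·a) − Re(conj v·b))`, of the Gross fibration
`ρ(u,v,z) = (log|z|, (|u|²−|v|²)/2)` is surjective iff `(u,v) ≠ (0,0)`; moreover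
`(u,v) = (0,0)` forces `f(z) = 0`, so `ρ` fails to be a submersion exactly at the fixed
points of the circle action. -/
theorem stmt_6 (f : Polynomial ℂ)
    (hf : ∀ w : ℂ, f.eval w = 0 → (Polynomial.derivative f).eval w ≠ 0)
    (u v z : ℂ) (hz : z ≠ 0) (hY : u * v = f.eval z) :
    ((∀ q : ℝ × ℝ, ∃ a b c : ℂ,
        v * a + u * b = (Polynomial.derivative f).eval z * c ∧
        (((starRingEnd ℂ) z * c).re / Complex.normSq z,
          ((starRingEnd ℂ) u * a).re - ((starRingEnd ℂ) v * b).re) = q) ↔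
      (u, v) ≠ ((0 : ℂ), (0 : ℂ))) ∧
    ((u, v) = ((0 : ℂ), (0 : ℂ)) → f.eval z = 0) := by
  have hforce : (u, v) = ((0 : ℂ), (0 : ℂ)) → f.eval z = 0 := by
    intro h
    obtain ⟨hu, hv⟩ := Prod.mk.injEq .. ▸ h
    simp [hu, hv] at hY
    exact hY.symm
  refine ⟨⟨?_, ?_⟩, hforce⟩
  · -- surjective → (u,v) ≠ 0
    intro hsurj h0
    obtain ⟨hu, hv⟩ := Prod.mk.injEq .. ▸ h0
    have hfz : f.eval z = 0 := hforce h0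
    have hfd := hf z hfz
    obtain ⟨a, b, c, hcon, hval⟩ := hsurj (1, 0)
    subst hu; subst hv
    simp only [zero_mul, add_zero] at hcon
    have hc : c = 0 := by
      rcases mul_eq_zero.mp hcon.symm with h | h
      · exact absurd h hfd
      · exact h
    rw [hc] at hval
    simp [Prod.ext_iff] at hval
  · -- (u,v) ≠ 0 → surjective
    intro hne q
    have hnz : Complex.normSq z ≠ 0 := by simpa using hz
    have hz2 : ((starRingEnd ℂ) z * ((q.1 : ℂ) * z)).re / Complex.normSq z = q.1 := by
      have : (starRingEnd ℂ) z * ((q.1 : ℂ) * z) = ((q.1 * Complex.normSq z : ℝ) : ℂ) := by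
        push_cast
        rw [mul_comm ((starRingEnd ℂ) z)]
        rw [mul_assoc, mul_comm ((q:ℝ×ℝ).1 : ℂ)]
        rw [Complex.mul_conj]
        ring
      rw [this, Complex.ofReal_re]
      field_simp
    set c : ℂ := (q.1 : ℂ) * z with hc
    set D : ℂ := (Polynomial.derivative f).eval z * c with hD
    by_cases hu : u ≠ 0
    · set K : ℝ := ((starRingEnd ℂ) v * (D / u)).re with hK
      set α : ℝ := (q.2 + K) / (Complex.normSq u + Complex.normSq v) with hα
      have hden : Complex.normSq u + Complex.normSq v ≠ 0 := by
        have h1 : 0 < Complex.normSq u := Complex.normSq_pos.mpr hu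
        have h2 : 0 ≤ Complex.normSq v := Complex.normSq_nonneg v
        linarith
      refine ⟨(α : ℂ) * u, D / u - (α : ℂ) * v, c, ?_, ?_⟩
      · field_simp
        ring
      · have e1 : (starRingEnd ℂ) u * ((α : ℂ) * u) = ((α * Complex.normSq u : ℝ) : ℂ) := by
          have h : (starRingEnd ℂ) u * ((α : ℝ) * u : ℂ) = ((α:ℝ) : ℂ) * (u * (starRingEnd ℂ) u) := by ring
          rw [h, Complex.mul_conj]; push_cast; ring
        have e2 : (starRingEnd ℂ) v * (D / u - (α : ℂ) * v)
            = (starRingEnd ℂ) v * (D / u) - ((α * Complex.normSq v : ℝ) : ℂ) := by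
          rw [mul_sub]
          congr 1
          have h : (starRingEnd ℂ) v * ((α : ℝ) * v : ℂ) = ((α:ℝ) : ℂ) * (v * (starRingEnd ℂ) v) := by ring
          rw [h, Complex.mul_conj]; push_cast; ring
        rw [e1, e2, Complex.sub_re, Complex.ofReal_re, Complex.ofReal_re]
        rw [Prod.ext_iff]
        refine ⟨hz2, ?_⟩
        simp only [← hK]
        rw [hα]
        field_simp
        ring
    · push_neg at hu
      have hv : v ≠ 0 := by
        intro hv
        exact hne (by simp [hu, hv])
      set L : ℝ := ((starRingEnd ℂ) u * (D / v)).re with hL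
      set β : ℝ := (L - q.2) / (Complex.normSq u + Complex.normSq v) with hβ
      have hden : Complex.normSq u + Complex.normSq v ≠ 0 := by
        have h1 : 0 < Complex.normSq v := Complex.normSq_pos.mpr hv
        have h2 : 0 ≤ Complex.normSq u := Complex.normSq_nonneg u
        linarith
      refine ⟨D / v - (β : ℂ) * u, (β : ℂ) * v, c, ?_, ?_⟩
      · field_simp
        ring
      · have e1 : (starRingEnd ℂ) u * (D / v - (β : ℂ) * u)
            = (starRingEnd ℂ) u * (D / v) - ((β * Complex.normSq u : ℝ) : ℂ) := by
          rw [mul_sub]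
          congr 1
          have h : (starRingEnd ℂ) u * ((β : ℝ) * u : ℂ) = ((β:ℝ) : ℂ) * (u * (starRingEnd ℂ) u) := by ring
          rw [h, Complex.mul_conj]; push_cast; ring
        have e2 : (starRingEnd ℂ) v * ((β : ℂ) * v) = ((β * Complex.normSq v : ℝ) : ℂ) := by
          have h : (starRingEnd ℂ) v * ((β : ℝ) * v : ℂ) = ((β:ℝ) : ℂ) * (v * (starRingEnd ℂ) v) := by ring
          rw [h, Complex.mul_conj]; push_cast; ring
        rw [e1, e2, Complex.sub_re, Complex.ofReal_re, Complex.ofReal_re]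
        rw [Prod.ext_iff]
        refine ⟨hz2, ?_⟩
        simp only [← hL]
        rw [hβ]
        field_simp
        ring
end

section
/- Let f : ℂ → ℂ be a polynomial, s ∈ ℝ, and let φ : D̄ → ℂ³ be a map from the closed unit disk D̄ = {w ∈ ℂ : |w| ≤ 1} which is continuous on D̄ and holomorphic on the open disk, with components φ = (u,v,z). Suppose that φ(D̄) ⊆ Y, i.e., u(w)·v(w) = f(z(w)) and z(w) ≠ 0 for all w ∈ D̄, and that |z(w)| = e^s for all w with |w| = 1. Then z is constant on D̄. In particular, every holomorphic disk in Y with boundary on a Lagrangian torus fiber T_{s,λ} of the Gross fibration is contained in a single fiber of the projection π(u,v,z) = z. -/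
open Complex Metric

/-- A holomorphic disk `φ = (u,v,z) : D̄ → ℂ³` with image in
`Y = {uv = f(z)} ⊆ ℂ² × ℂˣ` and whose boundary satisfies `|z| = e^s` has constant third
component `z`; i.e. every holomorphic disk in `Y` with boundary on a Lagrangian torus fiber
`T_{s,λ}` of the Gross fibration is contained in a single fiber of the projection
`π(u,v,z) = z`. -/
theorem stmt_7 (f : Polynomial ℂ) (s : ℝ)
    (φ : ℂ → ℂ × ℂ × ℂ) (u v z : ℂ → ℂ)
    (hφ : ∀ w : ℂ, φ w = (u w, v w, z w))
    (hcont : ContinuousOn φ (closedBall (0 : ℂ) 1))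
    (hhol : DifferentiableOn ℂ φ (ball (0 : ℂ) 1))
    (hY : ∀ w ∈ closedBall (0 : ℂ) 1, u w * v w = f.eval (z w) ∧ z w ≠ 0)
    (hbdry : ∀ w : ℂ, ‖w‖ = 1 → ‖z w‖ = Real.exp s) :
    ∃ z₀ : ℂ, ∀ w ∈ closedBall (0 : ℂ) 1, z w = z₀ := by
  -- z is the third component of φ
  have hz_eq : z = fun w => (φ w).2.2 := by
    funext w; rw [hφ w]
  have hzc : ContinuousOn z (closedBall (0 : ℂ) 1) := by
    rw [hz_eq]
    exact (continuous_snd.comp continuous_snd).comp_continuousOn hcont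
  have hzd : DifferentiableOn ℂ z (ball (0 : ℂ) 1) := by
    rw [hz_eq]
    exact (differentiable_snd.comp differentiable_snd).comp_differentiableOn hhol
  have hball : ball (0 : ℂ) 1 ⊆ closedBall (0 : ℂ) 1 := ball_subset_closedBall
  have hclosure : closure (ball (0 : ℂ) 1) = closedBall (0 : ℂ) 1 :=
    closure_ball (0 : ℂ) one_ne_zero
  have hzne : ∀ w ∈ closedBall (0 : ℂ) 1, z w ≠ 0 := fun w hw => (hY w hw).2
  have hdc : DiffContOnCl ℂ z (ball (0 : ℂ) 1) :=
    ⟨hzd, by rw [hclosure]; exact hzc⟩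
  have hfrontier : frontier (ball (0 : ℂ) 1) = sphere (0 : ℂ) 1 :=
    frontier_ball (0 : ℂ) one_ne_zero
  -- maximum principle: ‖z w‖ ≤ e^s on the closed ball
  have hmax : ∀ w ∈ closedBall (0 : ℂ) 1, ‖z w‖ ≤ Real.exp s := by
    intro w hw
    refine Complex.norm_le_of_forall_mem_frontier_norm_le isBounded_ball hdc ?_
      (by rwa [hclosure])
    intro x hx
    rw [hfrontier, mem_sphere_zero_iff_norm] at hx
    exact le_of_eq (hbdry x hx)
  -- minimum principle via 1/z
  have hdc' : DiffContOnCl ℂ (fun w => (z w)⁻¹) (ball (0 : ℂ) 1) := by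
    refine ⟨DifferentiableOn.inv hzd (fun w hw => hzne w (hball hw)), ?_⟩
    rw [hclosure]
    exact ContinuousOn.inv₀ hzc hzne
  have hmin : ∀ w ∈ closedBall (0 : ℂ) 1, Real.exp s ≤ ‖z w‖ := by
    intro w hw
    have h1 : ‖(z w)⁻¹‖ ≤ (Real.exp s)⁻¹ := by
      refine Complex.norm_le_of_forall_mem_frontier_norm_le isBounded_ball hdc' ?_
        (by rwa [hclosure])
      intro x hx
      rw [hfrontier, mem_sphere_zero_iff_norm] at hx
      rw [norm_inv, hbdry x hx]
    have hzw : (0 : ℝ) < ‖z w‖ := norm_pos_iff.mpr (hzne w hw)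
    rw [norm_inv] at h1
    exact (inv_le_inv₀ hzw (Real.exp_pos s)).mp h1
  -- so ‖z‖ is constant = e^s, and 0 is an interior max
  have hmaxOn : IsMaxOn (norm ∘ z) (ball (0 : ℂ) 1) 0 := by
    intro x hx
    have h0 : (0 : ℂ) ∈ closedBall (0 : ℂ) 1 := mem_closedBall_self zero_le_one
    calc ‖z x‖ ≤ Real.exp s := hmax x (hball hx)
      _ ≤ ‖z 0‖ := hmin 0 h0
  have h0ball : (0 : ℂ) ∈ ball (0 : ℂ) 1 := mem_ball_self one_pos
  have := Complex.eqOn_closure_of_isPreconnected_of_isMaxOn_norm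
    (convex_ball (0 : ℂ) 1).isPreconnected isOpen_ball hdc h0ball hmaxOn
  rw [hclosure] at this
  exact ⟨z 0, fun w hw => this hw⟩
end

section
/- Let f : ℂ → ℂ be a polynomial with distinct zeros, let Y = {(u,v,z) ∈ ℂ² × ℂˣ : uv = f(z)}, and for (s,λ) ∈ ℝ² let T_{s,λ} = {(u,v,z) ∈ Y : log|z| = s, (|u|²−|v|²)/2 = λ}. Fix s ∈ ℝ and λ ∈ ℝ with λ ≠ 0. Then there exists a nonconstant map φ : D̄ → ℂ³, continuous on the closed unit disk and holomorphic on the open disk, with φ(D̄) ⊆ Y and φ(∂D̄) ⊆ T_{s,λ}, if and only if f has a zero a ∈ ℂ with |a| = e^s. (For λ > 0 such a disk is given explicitly by φ(w) = (√(2λ)·w, 0, a), and for λ < 0 by φ(w) = (0, √(−2λ)·w, a).) Thus the wall — the locus of Lagrangian torus fibers bounding nonconstant holomorphic disks — is {(s,λ) : s = log|a_i| for some zero a_i of f}. -/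
open Complex Metric

/-- A holomorphic disk in `Y = {uv = f(z)} ⊆ ℂ² × ℂˣ` with boundary on the fiber
`T_{s,λ} = {log|z| = s, (|u|²−|v|²)/2 = λ}` of the Gross fibration: a map `φ : D̄ → ℂ³`,
continuous on the closed unit disk, holomorphic on its interior, with `φ(D̄) ⊆ Y` and
`φ(∂D̄) ⊆ T_{s,λ}`. -/
def IsHoloDiskOnFiber (f : Polynomial ℂ) (s lam : ℝ) (φ : ℂ → ℂ × ℂ × ℂ) : Prop :=
  ContinuousOn φ (closedBall (0 : ℂ) 1) ∧
  DifferentiableOn ℂ φ (ball (0 : ℂ) 1) ∧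
  (∀ w ∈ closedBall (0 : ℂ) 1, (φ w).1 * (φ w).2.1 = f.eval (φ w).2.2 ∧ (φ w).2.2 ≠ 0) ∧
  (∀ w : ℂ, ‖w‖ = 1 →
    Real.log ‖(φ w).2.2‖ = s ∧
    (‖(φ w).1‖ ^ 2 - ‖(φ w).2.1‖ ^ 2) / 2 = lam)

/-- A holomorphic function on the closed unit disk that is nonvanishing and has constant
modulus on the boundary circle is constant. -/
lemma const_of_const_norm_boundary {g : ℂ → ℂ}
    (hc : ContinuousOn g (closedBall (0 : ℂ) 1))
    (hd : DifferentiableOn ℂ g (ball (0 : ℂ) 1))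
    (hne : ∀ w ∈ closedBall (0 : ℂ) 1, g w ≠ 0)
    {r : ℝ} (hb : ∀ w : ℂ, ‖w‖ = 1 → ‖(g w)‖ = r) :
    ∀ w ∈ closedBall (0 : ℂ) 1, g w = g 0 := by
  have hone : ‖(1 : ℂ)‖ = 1 := by simp
  have h1mem : (1 : ℂ) ∈ closedBall (0 : ℂ) 1 := by
    simp [mem_closedBall, dist_eq_norm]
  have hr : 0 < r := by
    rw [← hb 1 hone]
    exact norm_pos_iff.mpr (hne 1 h1mem)
  have hclos : closure (ball (0 : ℂ) 1) = closedBall (0 : ℂ) 1 :=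
    closure_ball (0 : ℂ) one_ne_zero
  have hfront : frontier (ball (0 : ℂ) 1) = sphere (0 : ℂ) 1 :=
    frontier_ball (0 : ℂ) one_ne_zero
  have hdcl : DiffContOnCl ℂ g (ball (0 : ℂ) 1) := ⟨hd, by rwa [hclos]⟩
  have habs_sphere : ∀ w ∈ frontier (ball (0 : ℂ) 1), ‖(g w)‖ = r := by
    intro w hw
    rw [hfront, mem_sphere_zero_iff_norm] at hw
    exact hb w hw
  -- upper bound
  have hupper : ∀ w ∈ closedBall (0 : ℂ) 1, ‖g w‖ ≤ r := by
    intro w hw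
    refine Complex.norm_le_of_forall_mem_frontier_norm_le isBounded_ball hdcl ?_ ?_
    · intro ζ hζ
      rw [habs_sphere ζ hζ]
    · rwa [hclos]
  -- lower bound via 1/g
  have hlower : ∀ w ∈ closedBall (0 : ℂ) 1, r ≤ ‖g w‖ := by
    have hdcl' : DiffContOnCl ℂ (fun w => (g w)⁻¹) (ball (0 : ℂ) 1) := by
      refine ⟨hd.inv fun w hw => hne w (ball_subset_closedBall hw), ?_⟩
      rw [hclos]
      exact hc.inv₀ hne
    intro w hw
    have hinv : ‖(g w)⁻¹‖ ≤ r⁻¹ := by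
      refine Complex.norm_le_of_forall_mem_frontier_norm_le isBounded_ball hdcl' ?_ ?_
      · intro ζ hζ
        rw [norm_inv, habs_sphere ζ hζ]
      · rwa [hclos]
    have hgw : g w ≠ 0 := hne w hw
    rw [norm_inv] at hinv
    have hpos : 0 < ‖g w‖ := norm_pos_iff.mpr hgw
    rw [inv_le_inv₀ hpos hr] at hinv
    exact hinv
  have heq : ∀ w ∈ closedBall (0 : ℂ) 1, ‖g w‖ = r := fun w hw =>
    le_antisymm (hupper w hw) (hlower w hw)
  have h0 : (0 : ℂ) ∈ closedBall (0 : ℂ) 1 := mem_closedBall_self zero_le_one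
  have hmax : IsMaxOn (norm ∘ g) (ball (0 : ℂ) 1) 0 := by
    intro w hw
    simp only [Function.comp_apply, Set.mem_setOf_eq]
    rw [heq w (ball_subset_closedBall hw), heq 0 h0]
  have := Complex.eqOn_closedBall_of_isMaxOn_norm hdcl hmax
  intro w hw
  exact this hw

/-- The explicit disk for `λ > 0`. -/
lemma disk_pos (f : Polynomial ℂ) (s lam : ℝ) (hlam : 0 < lam) (a : ℂ)
    (hfa : f.eval a = 0) (habs : ‖a‖ = Real.exp s) :
    IsHoloDiskOnFiber f s lam
      (fun w => ((Real.sqrt (2 * lam) : ℂ) * w, (0 : ℂ), a)) := by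
  have h2l : (0 : ℝ) ≤ 2 * lam := by linarith
  have hcabs : ‖((Real.sqrt (2 * lam) : ℝ) : ℂ)‖ = Real.sqrt (2 * lam) := by
    rw [Complex.norm_real, Real.norm_of_nonneg (Real.sqrt_nonneg _)]
  refine ⟨?_, ?_, ?_, ?_⟩
  · exact (Continuous.continuousOn (by continuity))
  · exact ((differentiable_id.const_mul _).prodMk
      ((differentiable_const _).prodMk (differentiable_const _))).differentiableOn
  · intro w _
    constructor
    · simp [hfa]
    · intro h
      have ha : a = (0 : ℂ) := h
      rw [ha] at habs
      simp at habs
      exact (Real.exp_pos s).ne' habs.symm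
  · intro w hw
    constructor
    · simp [habs, Real.log_exp]
    · simp only [norm_mul, hcabs, hw, mul_one, norm_zero]
      rw [Real.sq_sqrt h2l]
      ring

/-- The explicit disk for `λ < 0`. -/
lemma disk_neg (f : Polynomial ℂ) (s lam : ℝ) (hlam : lam < 0) (a : ℂ)
    (hfa : f.eval a = 0) (habs : ‖a‖ = Real.exp s) :
    IsHoloDiskOnFiber f s lam
      (fun w => ((0 : ℂ), (Real.sqrt (-(2 * lam)) : ℂ) * w, a)) := by
  have h2l : (0 : ℝ) ≤ -(2 * lam) := by linarith
  have hcabs : ‖((Real.sqrt (-(2 * lam)) : ℝ) : ℂ)‖ = Real.sqrt (-(2 * lam)) := by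
    rw [Complex.norm_real, Real.norm_of_nonneg (Real.sqrt_nonneg _)]
  refine ⟨?_, ?_, ?_, ?_⟩
  · exact (Continuous.continuousOn (by continuity))
  · exact ((differentiable_const _).prodMk
      ((differentiable_id.const_mul _).prodMk (differentiable_const _))).differentiableOn
  · intro w _
    constructor
    · simp [hfa]
    · intro h
      have ha : a = (0 : ℂ) := h
      rw [ha] at habs
      simp at habs
      exact (Real.exp_pos s).ne' habs.symm
  · intro w hw
    constructor
    · simp [habs, Real.log_exp]
    · simp only [norm_mul, hcabs, hw, mul_one, norm_zero]
      rw [Real.sq_sqrt h2l]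
      ring

/-- For `λ ≠ 0`, the fiber `T_{s,λ}` bounds a nonconstant holomorphic disk in
`Y` iff `f` has a zero `a` with `|a| = e^s` (for `λ > 0` such a disk is
`φ(w) = (√(2λ)·w, 0, a)`, for `λ < 0` it is `φ(w) = (0, √(−2λ)·w, a)`); thus the wall is
`{(s,λ) : s = log|a_i| for some zero a_i of f}`. -/
theorem stmt_9 (f : Polynomial ℂ)
    (hf : ∀ w : ℂ, f.eval w = 0 → (Polynomial.derivative f).eval w ≠ 0)
    (s lam : ℝ) (hlam : lam ≠ 0) :
    ((∃ φ : ℂ → ℂ × ℂ × ℂ, IsHoloDiskOnFiber f s lam φ ∧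
        ¬ ∀ w₁ ∈ closedBall (0 : ℂ) 1, ∀ w₂ ∈ closedBall (0 : ℂ) 1, φ w₁ = φ w₂) ↔
      ∃ a : ℂ, f.eval a = 0 ∧ ‖a‖ = Real.exp s) ∧
    (0 < lam → ∀ a : ℂ, f.eval a = 0 → ‖a‖ = Real.exp s →
      IsHoloDiskOnFiber f s lam
        (fun w => ((Real.sqrt (2 * lam) : ℂ) * w, (0 : ℂ), a))) ∧
    (lam < 0 → ∀ a : ℂ, f.eval a = 0 → ‖a‖ = Real.exp s →
      IsHoloDiskOnFiber f s lam
        (fun w => ((0 : ℂ), (Real.sqrt (-(2 * lam)) : ℂ) * w, a))) := by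
  have hone : ‖(1 : ℂ)‖ = 1 := by simp
  have h1mem : (1 : ℂ) ∈ closedBall (0 : ℂ) 1 := by
    simp [mem_closedBall, dist_eq_norm]
  have h0mem : (0 : ℂ) ∈ closedBall (0 : ℂ) 1 := mem_closedBall_self zero_le_one
  refine ⟨⟨?_, ?_⟩, fun h a hfa habs => disk_pos f s lam h a hfa habs,
    fun h a hfa habs => disk_neg f s lam h a hfa habs⟩
  · -- forward direction
    rintro ⟨φ, ⟨hc, hd, hY, hT⟩, hnc⟩
    set u : ℂ → ℂ := fun w => (φ w).1 with hu_def
    set v : ℂ → ℂ := fun w => (φ w).2.1 with hv_def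
    set z : ℂ → ℂ := fun w => (φ w).2.2 with hz_def
    have hzc : ContinuousOn z (closedBall (0 : ℂ) 1) := hc.snd.snd
    have hzd : DifferentiableOn ℂ z (ball (0 : ℂ) 1) := hd.snd.snd
    have hzne : ∀ w ∈ closedBall (0 : ℂ) 1, z w ≠ 0 := fun w hw => (hY w hw).2
    have hzb : ∀ w : ℂ, ‖w‖ = 1 → ‖(z w)‖ = Real.exp s := by
      intro w hw
      have hwmem : w ∈ closedBall (0 : ℂ) 1 := by
        simp [mem_closedBall, dist_eq_norm, hw]
      have hlog := (hT w hw).1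
      have hpos : 0 < ‖(z w)‖ := norm_pos_iff.mpr (hzne w hwmem)
      rw [← hlog, Real.exp_log hpos]
    have hzconst := const_of_const_norm_boundary hzc hzd hzne hzb
    set a : ℂ := z 0 with ha_def
    have habs : ‖a‖ = Real.exp s := by
      rw [← hzconst 1 h1mem]
      exact hzb 1 hone
    refine ⟨a, ?_, habs⟩
    by_contra hfa
    -- f(a) ≠ 0; show φ is constant, contradiction
    have huv : ∀ w ∈ closedBall (0 : ℂ) 1, u w * v w = f.eval a := by
      intro w hw
      have := (hY w hw).1
      rwa [show (φ w).2.2 = z w from rfl, hzconst w hw] at this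
    have hune : ∀ w ∈ closedBall (0 : ℂ) 1, u w ≠ 0 := by
      intro w hw h
      apply hfa
      rw [← huv w hw, h, zero_mul]
    set c : ℝ := ‖(f.eval a)‖ with hc_def
    have hcpos : 0 < c := norm_pos_iff.mpr hfa
    -- on the boundary, |u| is constant
    have hub : ∀ w : ℂ, ‖w‖ = 1 →
        ‖(u w)‖ = ‖(u 1)‖ := by
      intro w hw
      have key : ∀ x : ℂ, ‖x‖ = 1 →
          ‖(u x)‖ ^ 2 * (‖(u x)‖ ^ 2 - 2 * lam) = c ^ 2 ∧
            0 < ‖(u x)‖ ^ 2 := by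
        intro x hx
        have hxmem : x ∈ closedBall (0 : ℂ) 1 := by
          simp [mem_closedBall, dist_eq_norm, hx]
        have h1 : ‖(u x)‖ * ‖(v x)‖ = c := by
          rw [← norm_mul, huv x hxmem]
        have h2 := (hT x hx).2
        have hup : 0 < ‖(u x)‖ := norm_pos_iff.mpr (hune x hxmem)
        constructor
        · nlinarith [h1, h2]
        · positivity
      obtain ⟨e1, p1⟩ := key w hw
      obtain ⟨e2, p2⟩ := key 1 hone
      have hfactor : (‖(u w)‖ ^ 2 - ‖(u 1)‖ ^ 2) *
          (‖(u w)‖ ^ 2 + ‖(u 1)‖ ^ 2 - 2 * lam) = 0 := by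
        linear_combination e1 - e2
      have h3 : 0 < ‖(u 1)‖ ^ 2 - 2 * lam := by nlinarith [e2, p2, hcpos]
      have h4 : 0 < ‖(u w)‖ ^ 2 + ‖(u 1)‖ ^ 2 - 2 * lam := by linarith
      have hsq : ‖(u w)‖ ^ 2 = ‖(u 1)‖ ^ 2 := by
        rcases mul_eq_zero.mp hfactor with h | h
        · linarith
        · linarith
      rw [← Real.sqrt_sq (norm_nonneg (u w)),
        ← Real.sqrt_sq (norm_nonneg (u 1)), hsq]
    have huc : ContinuousOn u (closedBall (0 : ℂ) 1) := hc.fst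
    have hud : DifferentiableOn ℂ u (ball (0 : ℂ) 1) := hd.fst
    have huconst := const_of_const_norm_boundary huc hud hune hub
    have hvconst : ∀ w ∈ closedBall (0 : ℂ) 1, v w = v 0 := by
      intro w hw
      have h1 : u w * v w = f.eval a := huv w hw
      have h2 : u 0 * v 0 = f.eval a := huv 0 h0mem
      rw [huconst w hw] at h1
      have hu0 : u 0 ≠ 0 := hune 0 h0mem
      have : u 0 * v w = u 0 * v 0 := by rw [h1, h2]
      exact mul_left_cancel₀ hu0 this
    exact hnc fun w₁ h₁ w₂ h₂ => by
      have e1 : φ w₁ = (u w₁, v w₁, z w₁) := rfl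
      have e2 : φ w₂ = (u w₂, v w₂, z w₂) := rfl
      rw [e1, e2, huconst w₁ h₁, huconst w₂ h₂, hvconst w₁ h₁, hvconst w₂ h₂,
        hzconst w₁ h₁, hzconst w₂ h₂]
  · -- backward direction
    rintro ⟨a, hfa, habs⟩
    rcases hlam.lt_or_gt with h | h
    · refine ⟨fun w => ((0 : ℂ), (Real.sqrt (-(2 * lam)) : ℂ) * w, a),
        disk_neg f s lam h a hfa habs, ?_⟩
      intro hcon
      have := hcon 1 h1mem 0 h0mem
      simp only [Prod.mk.injEq, mul_one, mul_zero] at this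
      have hsq : Real.sqrt (-(2 * lam)) ≠ 0 := by
        refine (Real.sqrt_pos.mpr (by linarith)).ne'
      exact hsq (by exact_mod_cast this.2.1)
    · refine ⟨fun w => ((Real.sqrt (2 * lam) : ℂ) * w, (0 : ℂ), a),
        disk_pos f s lam h a hfa habs, ?_⟩
      intro hcon
      have := hcon 1 h1mem 0 h0mem
      simp only [Prod.mk.injEq, mul_one, mul_zero] at this
      have hsq : Real.sqrt (2 * lam) ≠ 0 := by
        refine (Real.sqrt_pos.mpr (by linarith)).ne'
      exact hsq (by exact_mod_cast this.1)
end

section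
/- Let f : ℂ → ℂ be a polynomial and Y = {(u,v,z) ∈ ℂ² × ℂˣ : uv = f(z)}, with Kähler form ω_p(X_1,X_2) = Im(a_1·conj(a_2)) + Im(b_1·conj(b_2)) + Im(c_1·conj(c_2))/|z|² at p = (u,v,z). Let p = (u,v,z) ∈ Y with |u| = |v| and (u,v) ≠ (0,0), and let d ∈ ℂ. Then the Lagrangian L_γ = {(u,v,γ(t)) : |u| = |v|} associated to a path γ with tangent direction d at z is isotropic at p: for any two vectors X_1 = (a_1,b_1,c_1), X_2 = (a_2,b_2,c_2) ∈ ℂ³ satisfying, for j = 1,2, the conditions c_j = t_j·d with t_j ∈ ℝ, v·a_j + u·b_j = f′(z)·c_j, and Re(conj(u)·a_j) = Re(conj(v)·b_j), one has ω_p(X_1,X_2) = 0. -/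
open Complex

/-- The Lagrangian `L_γ = {(u,v,γ(t)) : |u| = |v|}` in
`Y = {uv = f(z)} ⊆ ℂ² × ℂˣ`, associated to a path `γ` with tangent direction `d` at `z`,
is isotropic at `p = (u,v,z)` with `|u| = |v|`, `(u,v) ≠ (0,0)`: any two vectors
`(a,b,c) ∈ ℂ³` with `c` a real multiple of `d`, `v·a + u·b = f′(z)·c` and
`Re(conj u·a) = Re(conj v·b)` pair to zero under `ω_p`. -/
theorem stmt_10 (f : Polynomial ℂ) (u v z : ℂ) (hz : z ≠ 0) (hY : u * v = f.eval z)
    (habs : ‖u‖ = ‖v‖) (huv : (u, v) ≠ ((0 : ℂ), (0 : ℂ)))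
    (d : ℂ) (a₁ b₁ c₁ a₂ b₂ c₂ : ℂ)
    (hc₁ : ∃ t₁ : ℝ, c₁ = (t₁ : ℂ) * d) (hc₂ : ∃ t₂ : ℝ, c₂ = (t₂ : ℂ) * d)
    (htan₁ : v * a₁ + u * b₁ = (Polynomial.derivative f).eval z * c₁)
    (htan₂ : v * a₂ + u * b₂ = (Polynomial.derivative f).eval z * c₂)
    (hre₁ : ((starRingEnd ℂ) u * a₁).re = ((starRingEnd ℂ) v * b₁).re)
    (hre₂ : ((starRingEnd ℂ) u * a₂).re = ((starRingEnd ℂ) v * b₂).re) :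
    omegaY (u, v, z) (a₁, b₁, c₁) (a₂, b₂, c₂) = 0 := by
  obtain ⟨t₁, rfl⟩ := hc₁
  obtain ⟨t₂, rfl⟩ := hc₂
  -- both u and v are nonzero
  have hu : u ≠ 0 := by
    rintro rfl
    simp at habs
    exact huv (by simp [norm_eq_zero.mp habs.symm])
  have hv : v ≠ 0 := by
    rintro rfl
    simp at habs
    exact huv (by simp [habs])
  have hns : Complex.normSq u = Complex.normSq v := by
    rw [← Complex.sq_norm, ← Complex.sq_norm, habs]
  set w : ℂ := (Polynomial.derivative f).eval z with hw
  set s : ℂ := (starRingEnd ℂ) (u * v) with hs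
  set K : ℂ := s * (w * d) with hK
  set α₁ : ℂ := s * (v * a₁) with hα₁def
  set α₂ : ℂ := s * (v * a₂) with hα₂def
  set β₁ : ℂ := s * (u * b₁) with hβ₁def
  set β₂ : ℂ := s * (u * b₂) with hβ₂def
  have huu : ((Complex.normSq u : ℝ) : ℂ) = u * (starRingEnd ℂ) u := (Complex.mul_conj u).symm
  have hvv : ((Complex.normSq v : ℝ) : ℂ) = v * (starRingEnd ℂ) v := (Complex.mul_conj v).symm
  have hα₁ : α₁ = ((Complex.normSq v : ℝ) : ℂ) * ((starRingEnd ℂ) u * a₁) := by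
    rw [hα₁def, hs, map_mul, ← Complex.mul_conj]; ring
  have hα₂ : α₂ = ((Complex.normSq v : ℝ) : ℂ) * ((starRingEnd ℂ) u * a₂) := by
    rw [hα₂def, hs, map_mul, ← Complex.mul_conj]; ring
  have hβ₁ : β₁ = ((Complex.normSq u : ℝ) : ℂ) * ((starRingEnd ℂ) v * b₁) := by
    rw [hβ₁def, hs, map_mul, ← Complex.mul_conj]; ring
  have hβ₂ : β₂ = ((Complex.normSq u : ℝ) : ℂ) * ((starRingEnd ℂ) v * b₂) := by
    rw [hβ₂def, hs, map_mul, ← Complex.mul_conj]; ring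
  -- real-part equalities
  have hre'₁ : α₁.re = β₁.re := by
    rw [hα₁, hβ₁, Complex.re_ofReal_mul, Complex.re_ofReal_mul, hns, hre₁]
  have hre'₂ : α₂.re = β₂.re := by
    rw [hα₂, hβ₂, Complex.re_ofReal_mul, Complex.re_ofReal_mul, hns, hre₂]
  -- tangency equalities rescaled
  have h1 : α₁ + β₁ = (t₁ : ℂ) * K := by
    rw [hα₁def, hβ₁def, hK]
    linear_combination s * htan₁
  have h2 : α₂ + β₂ = (t₂ : ℂ) * K := by
    rw [hα₂def, hβ₂def, hK]
    linear_combination s * htan₂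
  have e₁ : α₁.im + β₁.im = t₁ * K.im := by
    have := congrArg Complex.im h1
    simpa using this
  have e₂ : α₂.im + β₂.im = t₂ * K.im := by
    have := congrArg Complex.im h2
    simpa using this
  have r₁ : 2 * α₁.re = t₁ * K.re := by
    have := congrArg Complex.re h1
    simp only [Complex.add_re, Complex.mul_re, Complex.ofReal_re, Complex.ofReal_im] at this
    rw [← hre'₁] at this
    linarith
  have r₂ : 2 * α₂.re = t₂ * K.re := by
    have := congrArg Complex.re h2
    simp only [Complex.add_re, Complex.mul_re, Complex.ofReal_re, Complex.ofReal_im] at this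
    rw [← hre'₂] at this
    linarith
  have key : (α₁ * (starRingEnd ℂ) α₂).im + (β₁ * (starRingEnd ℂ) β₂).im = 0 := by
    simp only [Complex.mul_im, Complex.conj_re, Complex.conj_im]
    rw [← hre'₁] at *
    rw [← hre'₂] at *
    linear_combination α₂.re * e₁ - α₁.re * e₂ + (t₁ * K.im / 2) * r₂ - (t₂ * K.im / 2) * r₁
  -- translate key back to a,b
  have hkA : (α₁ * (starRingEnd ℂ) α₂).im
      = Complex.normSq v ^ 2 * Complex.normSq u * (a₁ * (starRingEnd ℂ) a₂).im := by
    have : α₁ * (starRingEnd ℂ) α₂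
        = ((Complex.normSq v ^ 2 * Complex.normSq u : ℝ) : ℂ) * (a₁ * (starRingEnd ℂ) a₂) := by
      rw [hα₁, hα₂]
      push_cast
      simp only [map_mul, Complex.conj_conj, Complex.conj_ofReal]
      rw [huu, hvv]
      ring
    rw [this, Complex.im_ofReal_mul]
  have hkB : (β₁ * (starRingEnd ℂ) β₂).im
      = Complex.normSq u ^ 2 * Complex.normSq v * (b₁ * (starRingEnd ℂ) b₂).im := by
    have : β₁ * (starRingEnd ℂ) β₂
        = ((Complex.normSq u ^ 2 * Complex.normSq v : ℝ) : ℂ) * (b₁ * (starRingEnd ℂ) b₂) := by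
      rw [hβ₁, hβ₂]
      push_cast
      simp only [map_mul, Complex.conj_conj, Complex.conj_ofReal]
      rw [huu, hvv]
      ring
    rw [this, Complex.im_ofReal_mul]
  have hN : Complex.normSq v ≠ 0 := (Complex.normSq_pos.mpr hv).ne'
  have hab : (a₁ * (starRingEnd ℂ) a₂).im + (b₁ * (starRingEnd ℂ) b₂).im = 0 := by
    rw [hkA, hkB, hns] at key
    have h3 : Complex.normSq v ^ 3 ≠ 0 := pow_ne_zero _ hN
    have : Complex.normSq v ^ 3 *
        ((a₁ * (starRingEnd ℂ) a₂).im + (b₁ * (starRingEnd ℂ) b₂).im) = 0 := by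
      linear_combination key
    exact (mul_eq_zero.mp this).resolve_left h3
  -- the c-term vanishes
  have hcc : (((t₁ : ℂ) * d) * (starRingEnd ℂ) ((t₂ : ℂ) * d)).im = 0 := by
    simp only [map_mul, Complex.conj_ofReal]
    have : ((t₁ : ℂ) * d) * (((t₂ : ℂ)) * (starRingEnd ℂ) d)
        = ((t₁ * t₂ * Complex.normSq d : ℝ) : ℂ) := by
      push_cast
      rw [← Complex.mul_conj]
      ring
    rw [this, Complex.ofReal_im]
  simp only [omegaY]
  rw [hcc, zero_div, add_zero, hab]
end

section
/- Let n ≥ 2 and let f : (ℂˣ)^{n−1} → ℂ be a Laurent polynomial, and let Y = {(u,v,z_1,…,z_{n−1}) ∈ ℂ² × (ℂˣ)^{n−1} : uv = f(z_1,…,z_{n−1})}. Let φ = (u,v,z_1,…,z_{n−1}) : D̄ → ℂ^{n+1} be continuous on the closed unit disk D̄ and holomorphic on the open disk, with φ(D̄) ⊆ Y. Suppose there exist r_1,…,r_{n−1} > 0 and λ ∈ ℝ such that on the boundary circle |w| = 1 one has |z_j(w)| = r_j for j = 1,…,n−1 and |u(w)|² − |v(w)|² = 2λ. Then each z_j is constant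 on D̄, say z_j ≡ z_j⁰; and if moreover f(z_1⁰,…,z_{n−1}⁰) ≠ 0, then φ is constant. Hence a nonconstant holomorphic disk with boundary on a torus fiber is contained in a singular fiber of the conic bundle π(u,v,z) = z, i.e., its (constant) base point z⁰ satisfies f(z⁰) = 0. -/
open Complex Metric Set Function

lemma const_of_unimod (g : ℂ → ℂ) (hc : ContinuousOn g (closedBall 0 1))
    (hd : DifferentiableOn ℂ g (ball 0 1))
    (hnz : ∀ w ∈ closedBall (0:ℂ) 1, g w ≠ 0)
    {c : ℝ} (hcpos : 0 < c)
    (hb : ∀ w : ℂ, ‖w‖ = 1 → ‖g w‖ = c) :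
    ∀ w ∈ closedBall (0:ℂ) 1, g w = g 0 := by
  have hcl : closure (ball (0:ℂ) 1) = closedBall 0 1 := closure_ball 0 one_ne_zero
  have hfr : frontier (ball (0:ℂ) 1) = sphere 0 1 := frontier_ball 0 one_ne_zero
  have hsp : ∀ w ∈ sphere (0:ℂ) 1, ‖w‖ = 1 := by
    intro w hw; simpa using mem_sphere_zero_iff_norm.mp hw
  have hdc : DiffContOnCl ℂ g (ball 0 1) := ⟨hd, hcl ▸ hc⟩
  have hdc' : DiffContOnCl ℂ (fun w => (g w)⁻¹) (ball 0 1) := by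
    refine ⟨hd.inv fun w hw => hnz w (ball_subset_closedBall hw), ?_⟩
    rw [hcl]; exact hc.inv₀ hnz
  have hub : ∀ w ∈ closedBall (0:ℂ) 1, ‖g w‖ ≤ c := by
    intro w hw
    refine norm_le_of_forall_mem_frontier_norm_le isBounded_ball hdc ?_ (hcl ▸ hw)
    intro z hz; rw [hfr] at hz
    exact le_of_eq (hb z (hsp z hz))
  have hlb : ∀ w ∈ closedBall (0:ℂ) 1, c ≤ ‖g w‖ := by
    intro w hw
    have h1 : ‖(g w)⁻¹‖ ≤ c⁻¹ := by
      refine norm_le_of_forall_mem_frontier_norm_le isBounded_ball hdc' ?_ (hcl ▸ hw)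
      intro z hz; rw [hfr] at hz
      rw [norm_inv]
      exact inv_anti₀ hcpos (le_of_eq (hb z (hsp z hz)).symm)
    rw [norm_inv] at h1
    have hg0 : 0 < ‖g w‖ := norm_pos_iff.mpr (hnz w hw)
    exact (inv_le_inv₀ hg0 hcpos).mp h1
  have heq : ∀ w ∈ closedBall (0:ℂ) 1, ‖g w‖ = c := fun w hw =>
    le_antisymm (hub w hw) (hlb w hw)
  have hmax : IsMaxOn (norm ∘ g) (ball (0:ℂ) 1) 0 := by
    intro w hw
    simp only [comp, mem_setOf_eq]
    rw [heq w (ball_subset_closedBall hw),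
      heq 0 (mem_closedBall_self zero_le_one)]
  have := eqOn_closure_of_isPreconnected_of_isMaxOn_norm
    (convex_ball (0:ℂ) 1).isPreconnected isOpen_ball hdc
    (mem_ball_self one_pos) hmax
  rw [hcl] at this
  exact fun w hw => this hw

/-- Let `f` be a Laurent polynomial on `(ℂˣ)^{n−1}` and
`Y = {uv = f(z)} ⊆ ℂ² × (ℂˣ)^{n−1}`. For a holomorphic disk `φ = (u,v,z₁,…,z_{n−1})` in `Y`
whose boundary lies on a torus fiber (`|z_j| = r_j`, `|u|² − |v|² = 2λ` on `∂D̄`), each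
`z_j` is constant, say `z_j ≡ z_j⁰`; and if moreover `f(z⁰) ≠ 0` then `φ` is constant.
Hence a nonconstant such disk is contained in a singular fiber of the conic bundle
`π(u,v,z) = z`. -/
theorem stmt_12 (n : ℕ) (hn : 2 ≤ n)
    (f : (Fin (n - 1) → ℂ) → ℂ)
    -- `f` is a Laurent polynomial on `(ℂˣ)^{n−1}`
    (hf : ∃ (m : ℕ) (a : Fin m → ℂ) (e : Fin m → Fin (n - 1) → ℤ),
      ∀ z : Fin (n - 1) → ℂ, (∀ j, z j ≠ 0) →
        f z = ∑ i : Fin m, a i * ∏ j : Fin (n - 1), z j ^ (e i j))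
    (φ : ℂ → ℂ × ℂ × (Fin (n - 1) → ℂ))
    (hcont : ContinuousOn φ (closedBall (0 : ℂ) 1))
    (hhol : DifferentiableOn ℂ φ (ball (0 : ℂ) 1))
    (hY : ∀ w ∈ closedBall (0 : ℂ) 1,
      (φ w).1 * (φ w).2.1 = f (φ w).2.2 ∧ ∀ j, (φ w).2.2 j ≠ 0)
    (r : Fin (n - 1) → ℝ) (hr : ∀ j, 0 < r j) (lam : ℝ)
    (hbdry : ∀ w : ℂ, ‖w‖ = 1 →
      (∀ j, ‖(φ w).2.2 j‖ = r j) ∧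
      ‖(φ w).1‖ ^ 2 - ‖(φ w).2.1‖ ^ 2 = 2 * lam) :
    ∃ z₀ : Fin (n - 1) → ℂ,
      (∀ w ∈ closedBall (0 : ℂ) 1, (φ w).2.2 = z₀) ∧
      (f z₀ ≠ 0 → ∀ w₁ ∈ closedBall (0 : ℂ) 1, ∀ w₂ ∈ closedBall (0 : ℂ) 1,
        φ w₁ = φ w₂) := by
  set z₀ : Fin (n-1) → ℂ := (φ 0).2.2 with hz₀
  have h0mem : (0:ℂ) ∈ closedBall (0:ℂ) 1 := mem_closedBall_self zero_le_one
  -- each z_j constant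
  have hzconst : ∀ w ∈ closedBall (0:ℂ) 1, (φ w).2.2 = z₀ := by
    have key : ∀ j, ∀ w ∈ closedBall (0:ℂ) 1, (φ w).2.2 j = z₀ j := by
      intro j
      refine const_of_unimod (fun w => (φ w).2.2 j) ?_ ?_ ?_ (hr j) ?_
      · exact (continuous_apply j).comp_continuousOn hcont.snd.snd
      · exact (differentiableOn_pi.mp hhol.snd.snd) j
      · exact fun w hw => (hY w hw).2 j
      · exact fun w hw => (hbdry w hw).1 j
    intro w hw
    funext j
    exact key j w hw
  refine ⟨z₀, hzconst, ?_⟩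
  intro hfz w₁ hw₁ w₂ hw₂
  -- u v = f z₀ everywhere
  have huv : ∀ w ∈ closedBall (0:ℂ) 1, (φ w).1 * (φ w).2.1 = f z₀ := by
    intro w hw
    rw [← hzconst w hw]
    exact (hY w hw).1
  have hune : ∀ w ∈ closedBall (0:ℂ) 1, (φ w).1 ≠ 0 := by
    intro w hw h
    exact hfz (by rw [← huv w hw, h, zero_mul])
  -- constant boundary modulus for u
  set F0 : ℝ := ‖f z₀‖ with hF0
  have hF0pos : 0 < F0 := norm_pos_iff.mpr hfz
  set s : ℝ := Real.sqrt (lam^2 + F0^2) with hs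
  have hs0 : 0 ≤ s := Real.sqrt_nonneg _
  have hs2 : s^2 = lam^2 + F0^2 := Real.sq_sqrt (by positivity)
  have hlams : 0 < lam + s := by
    have : |lam| < s := by
      rw [hs, ← Real.sqrt_sq_eq_abs]
      exact Real.sqrt_lt_sqrt (sq_nonneg _) (by nlinarith)
    cases' abs_lt.mp this with h1 h2
    linarith
  set c : ℝ := Real.sqrt (lam + s) with hc
  have hcpos : 0 < c := Real.sqrt_pos.mpr hlams
  have hubdry : ∀ w : ℂ, ‖w‖ = 1 → ‖(φ w).1‖ = c := by
    intro w hw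
    have hwcb : w ∈ closedBall (0:ℂ) 1 := by
      simp [mem_closedBall, Complex.dist_eq, hw]
    set A := ‖(φ w).1‖ with hA
    set B := ‖(φ w).2.1‖ with hB
    have hAB : A * B = F0 := by
      rw [hA, hB, ← norm_mul, huv w hwcb]
    have hA0 : 0 ≤ A := norm_nonneg _
    have hB0 : 0 ≤ B := norm_nonneg _
    have h2l : A^2 - B^2 = 2 * lam := (hbdry w hw).2
    have hA2 : A^2 = lam + s := by nlinarith [sq_nonneg (A^2 - lam - s), sq_nonneg (A^2 - lam + s)]
    rw [hc, ← hA2, Real.sqrt_sq hA0]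
  -- u constant
  have huconst : ∀ w ∈ closedBall (0:ℂ) 1, (φ w).1 = (φ 0).1 := by
    refine const_of_unimod (fun w => (φ w).1) hcont.fst hhol.fst hune hcpos hubdry
  -- v constant
  have hvconst : ∀ w ∈ closedBall (0:ℂ) 1, (φ w).2.1 = (φ 0).2.1 := by
    intro w hw
    have h1 := huv w hw
    have h2 := huv 0 h0mem
    rw [huconst w hw] at h1
    exact mul_left_cancel₀ (hune 0 h0mem) (h1.trans h2.symm)
  have : ∀ w ∈ closedBall (0:ℂ) 1, φ w = φ 0 := by
    intro w hw
    have := hzconst w hw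
    exact Prod.ext (huconst w hw) (Prod.ext (hvconst w hw) (by rw [hzconst w hw]))
  rw [this w₁ hw₁, this w₂ hw₂]
end
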